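/- Let n, k be positive integers with k ≥ 1 and n ≥ k², and let x₁ ≥ x₂ ≥ ... ≥ xₙ be real numbers, not all zero, with x₁ + x₂ + ... + xₙ = 0. If the number of k-element subsets of {1,...,n} with nonnegative sum is at most C(n-1, k-1), then the number N of k-element subsets S with 1 ∈ S and ∑_{i∈S} xᵢ ≥ 0 satisfies (N : ℝ) ≥ (1 - (6k-3)(k-1)/(n-2k+1)) · C(n-1, k-1). -/

import Mathlib

open Finset

lemma count_mem_powersetCard (s : Finset ℕ) (i : ℕ) (hi : i ∈ s) (r : ℕ) (hr : 1 ≤ r) :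
    (((s.powersetCard r).filter (fun F => i ∈ F)).card)
      = (s.card - 1).choose (r - 1) := by
  classical
  have h1 : (s.erase i).card = s.card - 1 := Finset.card_erase_of_mem hi
  rw [← h1, ← Finset.card_powersetCard (r-1) (s.erase i)]
  refine Finset.card_bij' (fun F _ => F.erase i) (fun T _ => insert i T) ?hi ?hj ?li ?ri
  case hi =>
    intro F hF
    simp only [mem_filter, Finset.mem_powersetCard] at hF
    obtain ⟨⟨hsub, hcard⟩, hiF⟩ := hF
    rw [Finset.mem_powersetCard]
    exact ⟨Finset.erase_subset_erase _ hsub, by rw [Finset.card_erase_of_mem hiF, hcard]⟩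
  case hj =>
    intro T hT
    rw [Finset.mem_powersetCard] at hT
    obtain ⟨hsub, hcard⟩ := hT
    have hiT : i ∉ T := fun h => (Finset.notMem_erase i s) (hsub h)
    simp only [mem_filter, Finset.mem_powersetCard]
    refine ⟨⟨?_, ?_⟩, Finset.mem_insert_self _ _⟩
    · intro j hj
      rcases Finset.mem_insert.mp hj with rfl | hj
      · exact hi
      · exact (Finset.erase_subset _ _) (hsub hj)
    · rw [Finset.card_insert_of_notMem hiT, hcard]; omega
  case li =>
    intro F hF
    simp only [mem_filter] at hF
    exact Finset.insert_erase hF.2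
  case ri =>
    intro T hT
    rw [Finset.mem_powersetCard] at hT
    have hiT : i ∉ T := fun h => (Finset.notMem_erase i s) (hT.1 h)
    exact Finset.erase_insert hiT

lemma sum_powersetCard_sum (s : Finset ℕ) (r : ℕ) (hr : 1 ≤ r) (g : ℕ → ℝ) :
    ∑ F ∈ s.powersetCard r, ∑ i ∈ F, g i
      = ((s.card - 1).choose (r - 1) : ℝ) * ∑ i ∈ s, g i := by
  classical
  have step1 : ∀ F ∈ s.powersetCard r, ∑ i ∈ F, g i = ∑ i ∈ s, if i ∈ F then g i else 0 := by
    intro F hF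
    rw [Finset.mem_powersetCard] at hF
    rw [Finset.sum_ite_mem s F g, Finset.inter_eq_right.mpr hF.1]
  calc ∑ F ∈ s.powersetCard r, ∑ i ∈ F, g i
      = ∑ F ∈ s.powersetCard r, ∑ i ∈ s, (if i ∈ F then g i else 0) :=
        Finset.sum_congr rfl step1
    _ = ∑ i ∈ s, ∑ F ∈ s.powersetCard r, (if i ∈ F then g i else 0) := Finset.sum_comm
    _ = ∑ i ∈ s, (((s.powersetCard r).filter (fun F => i ∈ F)).card : ℝ) * g i := by
        refine Finset.sum_congr rfl fun i hi => ?_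
        rw [← Finset.sum_filter, Finset.sum_const, nsmul_eq_mul]
    _ = ∑ i ∈ s, ((s.card - 1).choose (r - 1) : ℝ) * g i := by
        refine Finset.sum_congr rfl fun i hi => ?_
        rw [count_mem_powersetCard s i hi r hr]
    _ = _ := by rw [← Finset.mul_sum]

lemma final_arith (a d t c1 c2 K N : ℝ) (hK : 2 ≤ K) (hN : K^2 ≤ N)
    (hcoef : (6*K - 3)*(K - 1) < N - 2*K + 1)
    (hsplit : a + d = c1) (htd : t ≤ d) (hc2c1 : c2 ≤ c1)
    (hd0 : 0 ≤ d) (hc20 : 0 ≤ c2)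
    (hmain : d * (N - K) ≤ K^2 * t + K * c2) :
    (1 - (6*K - 3)*(K - 1)/(N - 2*K + 1)) * c1 ≤ a := by
  have hc10 : 0 ≤ c1 := le_trans hc20 hc2c1
  have hApos : (0:ℝ) < N - 2*K + 1 := by nlinarith
  have h1 : d * (N - K - K^2) ≤ K * c1 := by
    nlinarith [mul_le_mul_of_nonneg_left htd (by positivity : (0:ℝ) ≤ K^2),
      mul_le_mul_of_nonneg_left hc2c1 (by nlinarith : (0:ℝ) ≤ K)]
  have hlin : N - 1 ≤ 3 * (N - K - K^2) := by
    nlinarith [sq_nonneg (K - 2)]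
  have hcoef2 : (0:ℝ) ≤ 6*K^2 - 12*K + 3 := by nlinarith
  have s1 : d * (N - 2*K + 1) ≤ d * (N - 1) :=
    mul_le_mul_of_nonneg_left (by linarith) hd0
  have s2 : d * (N - 1) ≤ d * (3 * (N - K - K^2)) :=
    mul_le_mul_of_nonneg_left hlin hd0
  have s5 : 3 * (K * c1) ≤ (6*K - 3) * (K - 1) * c1 := by
    nlinarith [mul_nonneg hcoef2 hc10]
  have h2 : d * (N - 2*K + 1) ≤ (6*K - 3) * (K - 1) * c1 := by nlinarith [s1, s2, h1, s5]
  have hfinal : d ≤ ((6*K - 3) * (K - 1) * c1) / (N - 2*K + 1) :=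
    (le_div_iff₀ hApos).mpr h2
  rw [sub_mul, one_mul, div_mul_eq_mul_div]
  linarith [hfinal]

theorem many_nonneg_on_first (n k : ℕ) (hk : 1 ≤ k) (hn : k ^ 2 ≤ n)
    (x : ℕ → ℝ)
    (hdec : ∀ i j, 1 ≤ i → i ≤ j → j ≤ n → x j ≤ x i)
    (hne : ∃ i ∈ Finset.Icc 1 n, x i ≠ 0)
    (hsum : ∑ i ∈ Finset.Icc 1 n, x i = 0)
    (hfew : (((Finset.Icc 1 n).powersetCard k).filter
        (fun S => 0 ≤ ∑ i ∈ S, x i)).card ≤ (n - 1).choose (k - 1)) :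
    ((((Finset.Icc 1 n).powersetCard k).filter
        (fun S => 1 ∈ S ∧ 0 ≤ ∑ i ∈ S, x i)).card : ℝ) ≥
      (1 - ((6 * (k : ℝ) - 3) * ((k : ℝ) - 1)) / ((n : ℝ) - 2 * k + 1)) *
        ((n - 1).choose (k - 1) : ℝ) := by
  classical
  -- basic facts
  have hkk : k ≤ k ^ 2 := by nlinarith
  have hkn : k ≤ n := le_trans hkk hn
  have hn1 : 1 ≤ n := le_trans hk hkn
  have h1I : (1:ℕ) ∈ Finset.Icc 1 n := by simp [hn1]
  have hxle : ∀ j ∈ Finset.Icc 1 n, x j ≤ x 1 := by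
    intro j hj
    rw [Finset.mem_Icc] at hj
    exact hdec 1 j le_rfl hj.1 hj.2
  have hx1pos : 0 < x 1 := by
    by_contra h
    push_neg at h
    have hall : ∀ j ∈ Finset.Icc 1 n, x j ≤ 0 := fun j hj => le_trans (hxle j hj) h
    obtain ⟨i, hi, hne'⟩ := hne
    exact hne' ((Finset.sum_eq_zero_iff_of_nonpos hall).mp hsum i hi)
  by_cases hk1 : k = 1
  · -- k = 1 : the singleton {1} is nonnegative, RHS equals 1
    subst hk1
    have hmem : ({1} : Finset ℕ) ∈ ((Finset.Icc 1 n).powersetCard 1).filter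
        (fun S => 1 ∈ S ∧ 0 ≤ ∑ i ∈ S, x i) := by
      simp only [mem_filter, Finset.mem_powersetCard, Finset.singleton_subset_iff,
        Finset.card_singleton, Finset.mem_singleton, Finset.sum_singleton]
      exact ⟨⟨h1I, trivial⟩, trivial, le_of_lt hx1pos⟩
    have hcard1 : 1 ≤ (((Finset.Icc 1 n).powersetCard 1).filter
        (fun S => 1 ∈ S ∧ 0 ≤ ∑ i ∈ S, x i)).card := Finset.card_pos.mpr ⟨_, hmem⟩
    have hrhs : (1 - ((6 * ((1:ℕ) : ℝ) - 3) * (((1:ℕ) : ℝ) - 1)) / ((n : ℝ) - 2 * (1:ℕ) + 1)) *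
        ((n - 1).choose (1 - 1) : ℝ) = 1 := by
      norm_num
    rw [ge_iff_le, hrhs]
    exact_mod_cast hcard1
  · -- now k ≥ 2
    have hk2 : 2 ≤ k := by omega
    -- notation
    set A1 := ((Finset.Icc 1 n).powersetCard k).filter
        (fun S => 1 ∈ S ∧ 0 ≤ ∑ i ∈ S, x i) with hA1def
    by_cases hcoef : ((n : ℝ) - 2 * k + 1) ≤ (6 * (k : ℝ) - 3) * ((k : ℝ) - 1)
    · -- trivial branch : RHS ≤ 0
      have hApos : (0:ℝ) < (n : ℝ) - 2 * k + 1 := by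
        have : (k:ℝ) ^ 2 ≤ (n:ℝ) := by exact_mod_cast hn
        have : (2:ℝ) ≤ (k:ℝ) := by exact_mod_cast hk2
        nlinarith
      have hcge : (1:ℝ) ≤ (6 * (k : ℝ) - 3) * ((k : ℝ) - 1) / ((n : ℝ) - 2 * k + 1) :=
        (one_le_div hApos).mpr hcoef
      have : (1 - ((6 * (k : ℝ) - 3) * ((k : ℝ) - 1)) / ((n : ℝ) - 2 * k + 1)) *
          ((n - 1).choose (k - 1) : ℝ) ≤ 0 :=
        mul_nonpos_of_nonpos_of_nonneg (by linarith) (by positivity)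
      calc (1 - ((6 * (k : ℝ) - 3) * ((k : ℝ) - 1)) / ((n : ℝ) - 2 * k + 1)) *
          ((n - 1).choose (k - 1) : ℝ) ≤ 0 := this
        _ ≤ (A1.card : ℝ) := by positivity
    · -- main branch
      push_neg at hcoef
      have hKR : (2:ℝ) ≤ (k:ℝ) := by exact_mod_cast hk2
      have hnK : ((k:ℝ))^2 ≤ (n:ℝ) := by exact_mod_cast hn
      have hkn1 : k + 1 ≤ n := by
        have h2k : 2*k ≤ k^2 := by nlinarith
        omega
      -- notation
      set I2 := Finset.Icc 2 n with hI2def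
      set U := I2.powersetCard k with hUdef
      set B := (I2.powersetCard (k-1)).filter (fun T => x 1 + ∑ i ∈ T, x i < 0) with hBdef
      set G := U.filter (fun F => 0 ≤ ∑ i ∈ F, x i) with hGdef
      set D1 := ((Finset.Icc 1 n).powersetCard k).filter
          (fun S => 1 ∈ S ∧ ∑ i ∈ S, x i < 0) with hD1def
      have hI2sub : I2 ⊆ Finset.Icc 1 n := Finset.Icc_subset_Icc (by omega) le_rfl
      have hI2card : I2.card = n - 1 := by rw [hI2def, Nat.card_Icc]; omega
      have hIcard : (Finset.Icc 1 n).card = n := by rw [Nat.card_Icc]; omega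
      have h1notI2 : (1:ℕ) ∉ I2 := by simp [hI2def]
      have hxleI2 : ∀ j ∈ I2, x j ≤ x 1 := fun j hj => hxle j (hI2sub hj)
      -- counting the k-sets containing 1
      have hbase : (((Finset.Icc 1 n).powersetCard k).filter (fun S => (1:ℕ) ∈ S)).card
          = (n-1).choose (k-1) := by
        rw [count_mem_powersetCard _ 1 h1I k hk, hIcard]
      have hA1eq : A1 = (((Finset.Icc 1 n).powersetCard k).filter (fun S => (1:ℕ) ∈ S)).filter
          (fun S => 0 ≤ ∑ i ∈ S, x i) := by
        rw [hA1def, Finset.filter_filter]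
      have hD1eq : (((Finset.Icc 1 n).powersetCard k).filter (fun S => (1:ℕ) ∈ S)).filter
          (fun S => ¬ (0 ≤ ∑ i ∈ S, x i)) = D1 := by
        rw [hD1def, Finset.filter_filter]
        ext S
        simp only [Finset.mem_filter, not_le]
      have hsplit : A1.card + D1.card = (n-1).choose (k-1) := by
        rw [hA1eq, ← hD1eq, Finset.card_filter_add_card_filter_not, hbase]
      -- bijection between the negative k-sets containing 1 and the bad (k-1)-sets
      have hDB : D1.card = B.card := by
        rw [hD1def, hBdef]
        refine Finset.card_bij' (fun S _ => S.erase 1) (fun T _ => insert 1 T) ?hi ?hj ?li ?ri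
        case hi =>
          intro S hS
          simp only [Finset.mem_filter, Finset.mem_powersetCard] at hS
          obtain ⟨⟨hsub, hcard⟩, h1S, hneg⟩ := hS
          simp only [Finset.mem_filter, Finset.mem_powersetCard]
          refine ⟨⟨?_, ?_⟩, ?_⟩
          · intro j hj
            have hj1 := Finset.mem_erase.mp hj
            have hj2 := Finset.mem_Icc.mp (hsub hj1.2)
            rw [hI2def]
            exact Finset.mem_Icc.mpr ⟨by omega, hj2.2⟩
          · rw [Finset.card_erase_of_mem h1S, hcard]
          · have hsum' := Finset.sum_erase_add S x h1S
            linarith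
        case hj =>
          intro T hT
          simp only [Finset.mem_filter, Finset.mem_powersetCard] at hT
          obtain ⟨⟨hsub, hcard⟩, hneg⟩ := hT
          have h1T : (1:ℕ) ∉ T := fun h => h1notI2 (hsub h)
          simp only [Finset.mem_filter, Finset.mem_powersetCard]
          refine ⟨⟨?_, ?_⟩, Finset.mem_insert_self _ _, ?_⟩
          · exact Finset.insert_subset h1I (fun j hj => hI2sub (hsub hj))
          · rw [Finset.card_insert_of_notMem h1T, hcard]; omega
          · rw [Finset.sum_insert h1T]; exact hneg
        case li =>
          intro S hS
          simp only [Finset.mem_filter] at hS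
          exact Finset.insert_erase hS.2.1
        case ri =>
          intro T hT
          simp only [Finset.mem_filter, Finset.mem_powersetCard] at hT
          have h1T : (1:ℕ) ∉ T := fun h => h1notI2 (hT.1.1 h)
          exact Finset.erase_insert h1T
      -- few nonnegative sets avoiding 1
      have hdisj : Disjoint A1 G := by
        rw [Finset.disjoint_left]
        intro S hS hSG
        have h1S : 1 ∈ S := by
          rw [hA1def] at hS
          exact (Finset.mem_filter.mp hS).2.1
        have hsub : S ⊆ I2 := by
          rw [hGdef] at hSG
          have := (Finset.mem_filter.mp hSG).1
          rw [hUdef] at this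
          exact (Finset.mem_powersetCard.mp this).1
        exact h1notI2 (hsub h1S)
      have hsubfew : A1 ∪ G ⊆ ((Finset.Icc 1 n).powersetCard k).filter
          (fun S => 0 ≤ ∑ i ∈ S, x i) := by
        intro S hS
        rcases Finset.mem_union.mp hS with h | h
        · rw [hA1def] at h
          rw [Finset.mem_filter] at h ⊢
          exact ⟨h.1, h.2.2⟩
        · rw [hGdef] at h
          rw [Finset.mem_filter] at h ⊢
          refine ⟨?_, h.2⟩
          rw [hUdef] at h
          exact Finset.powersetCard_mono hI2sub h.1
      have hGD : G.card ≤ D1.card := by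
        have h1 := Finset.card_le_card hsubfew
        rw [Finset.card_union_of_disjoint hdisj] at h1
        omega
      -- the sum over Icc 2 n
      have hsumI2 : ∑ i ∈ I2, x i = - x 1 := by
        have hins : Finset.Icc 1 n = insert 1 I2 := by
          rw [hI2def]
          ext j
          simp only [Finset.mem_Icc, Finset.mem_insert]
          omega
        rw [hins, Finset.sum_insert h1notI2] at hsum
        linarith
      have hUf : ∑ F ∈ U, ∑ i ∈ F, x i = ((n-2).choose (k-1) : ℝ) * (- x 1) := by
        rw [hUdef, sum_powersetCard_sum I2 k hk x, hI2card, hsumI2]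
        have hsub2 : n - 1 - 1 = n - 2 := by omega
        rw [hsub2]
      -- positive and negative parts
      set ng : Finset ℕ → ℝ := fun F => if 0 ≤ ∑ i ∈ F, x i then 0 else -(∑ i ∈ F, x i)
        with hngdef
      set ps : Finset ℕ → ℝ := fun F => if 0 ≤ ∑ i ∈ F, x i then (∑ i ∈ F, x i) else 0
        with hpsdef
      have hng0 : ∀ F, 0 ≤ ng F := by
        intro F
        simp only [hngdef]
        split_ifs with h
        · exact le_rfl
        · linarith [lt_of_not_ge h]
      have hpng : ∀ F, ps F = ng F + ∑ i ∈ F, x i := by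
        intro F
        simp only [hpsdef, hngdef]
        split_ifs with h
        · ring
        · ring
      have hfsle : ∀ F ∈ U, ∑ i ∈ F, x i ≤ (k:ℝ) * x 1 := by
        intro F hF
        rw [hUdef, Finset.mem_powersetCard] at hF
        calc ∑ i ∈ F, x i ≤ F.card • x 1 :=
              Finset.sum_le_card_nsmul F x (x 1) (fun i hi => hxleI2 i (hF.1 hi))
          _ = (k:ℝ) * x 1 := by rw [hF.2, nsmul_eq_mul]
      have hpos_le : ∑ F ∈ U, ps F ≤ (G.card : ℝ) * ((k:ℝ) * x 1) := by
        have hb : ∀ F ∈ U, ps F ≤ (if 0 ≤ ∑ i ∈ F, x i then (k:ℝ) * x 1 else 0) := by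
          intro F hF
          simp only [hpsdef]
          split_ifs with h
          · exact hfsle F hF
          · exact le_rfl
        calc ∑ F ∈ U, ps F ≤ ∑ F ∈ U, (if 0 ≤ ∑ i ∈ F, x i then (k:ℝ) * x 1 else 0) :=
              Finset.sum_le_sum hb
          _ = ∑ F ∈ G, (k:ℝ) * x 1 := by
              rw [hGdef]
              exact (Finset.sum_filter _ _).symm
          _ = (G.card : ℝ) * ((k:ℝ) * x 1) := by rw [Finset.sum_const, nsmul_eq_mul]
      -- per bad T lower bound
      have hperT : ∀ T ∈ B, ((n:ℝ) - k) * x 1 ≤ ∑ j ∈ I2 \ T, ng (insert j T) := by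
        intro T hT
        rw [hBdef, Finset.mem_filter, Finset.mem_powersetCard] at hT
        obtain ⟨⟨hTsub, hTcard⟩, hTneg⟩ := hT
        have hstep : ∀ j ∈ I2 \ T, ng (insert j T) = -(x j + ∑ i ∈ T, x i) := by
          intro j hj
          obtain ⟨hjI, hjT⟩ := Finset.mem_sdiff.mp hj
          have hfins : ∑ i ∈ insert j T, x i = x j + ∑ i ∈ T, x i := Finset.sum_insert hjT
          have hneg : ∑ i ∈ insert j T, x i < 0 := by
            rw [hfins]
            have := hxleI2 j hjI
            linarith
          simp only [hngdef]
          rw [if_neg (not_le.mpr hneg), hfins]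
        rw [Finset.sum_congr rfl hstep]
        have hsd : ∑ j ∈ I2 \ T, x j = - x 1 - ∑ i ∈ T, x i := by
          have h := Finset.sum_sdiff (f := x) hTsub
          rw [hsumI2] at h
          linarith
        have hcd : (((I2 \ T).card) : ℝ) = (n:ℝ) - k := by
          rw [Finset.card_sdiff_of_subset hTsub, hI2card, hTcard]
          have : n - 1 - (k - 1) = n - k := by omega
          rw [this, Nat.cast_sub hkn]
        have hexpand : ∑ j ∈ I2 \ T, -(x j + ∑ i ∈ T, x i)
            = -(∑ j ∈ I2 \ T, x j) + (((I2 \ T).card) : ℝ) * (-(∑ i ∈ T, x i)) := by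
          simp only [neg_add]
          rw [Finset.sum_add_distrib, Finset.sum_neg_distrib, Finset.sum_const, nsmul_eq_mul]
        rw [hexpand, hsd, hcd]
        have h1nk : (1:ℝ) ≤ (n:ℝ) - k := by
          have hc : ((k:ℝ) + 1) ≤ (n:ℝ) := by exact_mod_cast hkn1
          linarith
        nlinarith [hTneg]
      have hlhs : (B.card : ℝ) * (((n:ℝ) - k) * x 1)
          ≤ ∑ T ∈ B, ∑ j ∈ I2 \ T, ng (insert j T) := by
        have := Finset.card_nsmul_le_sum B (fun T => ∑ j ∈ I2 \ T, ng (insert j T))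
          (((n:ℝ) - k) * x 1) hperT
        rwa [nsmul_eq_mul] at this
      -- double counting the pairs
      have hpair : ∑ T ∈ B, ∑ j ∈ I2 \ T, ng (insert j T) ≤ (k:ℝ) * ∑ F ∈ U, ng F := by
        classical
        set P := (B ×ˢ I2).filter (fun p => p.2 ∉ p.1) with hPdef
        set Q := (U ×ˢ I2).filter (fun q => q.2 ∈ q.1) with hQdef
        have hPsum : ∑ p ∈ P, ng (insert p.2 p.1)
            = ∑ T ∈ B, ∑ j ∈ I2 \ T, ng (insert j T) := by
          rw [hPdef, Finset.sum_filter, Finset.sum_product]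
          refine Finset.sum_congr rfl fun T hT => ?_
          rw [Finset.sdiff_eq_filter, Finset.sum_filter]
        have hQsum : ∑ q ∈ Q, ng q.1 = (k:ℝ) * ∑ F ∈ U, ng F := by
          rw [hQdef, Finset.sum_filter, Finset.sum_product, Finset.mul_sum]
          refine Finset.sum_congr rfl fun F hF => ?_
          have hFp : F ⊆ I2 ∧ F.card = k := by
            rw [hUdef] at hF
            exact Finset.mem_powersetCard.mp hF
          calc ∑ j ∈ I2, (if j ∈ F then ng F else 0)
              = ∑ j ∈ I2 ∩ F, ng F := Finset.sum_ite_mem I2 F (fun _ => ng F)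
            _ = ∑ j ∈ F, ng F := by rw [Finset.inter_eq_right.mpr hFp.1]
            _ = (k:ℝ) * ng F := by rw [Finset.sum_const, hFp.2, nsmul_eq_mul]
        have himg : P.image (fun p => (insert p.2 p.1, p.2)) ⊆ Q := by
          intro q hq
          obtain ⟨p, hp, rfl⟩ := Finset.mem_image.mp hq
          have hp' := Finset.mem_filter.mp hp
          obtain ⟨hpB, hpI⟩ := Finset.mem_product.mp hp'.1
          have hpnot := hp'.2
          have hTp : p.1 ⊆ I2 ∧ p.1.card = k - 1 := by
            rw [hBdef] at hpB
            exact Finset.mem_powersetCard.mp (Finset.mem_filter.mp hpB).1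
          rw [hQdef, Finset.mem_filter, Finset.mem_product]
          refine ⟨⟨?_, hpI⟩, Finset.mem_insert_self _ _⟩
          rw [hUdef, Finset.mem_powersetCard]
          constructor
          · exact Finset.insert_subset hpI hTp.1
          · rw [Finset.card_insert_of_notMem hpnot, hTp.2]
            omega
        have hinj : ∀ p ∈ P, ∀ p' ∈ P,
            (fun p => (insert p.2 p.1, p.2)) p = (fun p => (insert p.2 p.1, p.2)) p' → p = p' := by
          intro p hp p' hp' heq
          simp only [Prod.mk.injEq] at heq
          obtain ⟨hins, hj⟩ := heq
          have hnot := (Finset.mem_filter.mp hp).2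
          have hnot' := (Finset.mem_filter.mp hp').2
          have h1 : p.1 = p'.1 := by
            have e1 : (insert p.2 p.1).erase p.2 = p.1 := Finset.erase_insert hnot
            have e2 : (insert p'.2 p'.1).erase p'.2 = p'.1 := Finset.erase_insert hnot'
            rw [← e1, ← e2, hins, hj]
          exact Prod.ext h1 hj
        have himgsum : ∑ p ∈ P, ng (insert p.2 p.1)
            = ∑ q ∈ P.image (fun p => (insert p.2 p.1, p.2)), ng q.1 :=
          (Finset.sum_image (f := fun q : Finset ℕ × ℕ => ng q.1) hinj).symm
        have hle : ∑ q ∈ P.image (fun p => (insert p.2 p.1, p.2)), ng q.1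
            ≤ ∑ q ∈ Q, ng q.1 :=
          Finset.sum_le_sum_of_subset_of_nonneg himg (fun q _ _ => hng0 q.1)
        calc ∑ T ∈ B, ∑ j ∈ I2 \ T, ng (insert j T)
            = ∑ p ∈ P, ng (insert p.2 p.1) := hPsum.symm
          _ = ∑ q ∈ P.image (fun p => (insert p.2 p.1, p.2)), ng q.1 := himgsum
          _ ≤ ∑ q ∈ Q, ng q.1 := hle
          _ = (k:ℝ) * ∑ F ∈ U, ng F := hQsum
      have hkey : (B.card : ℝ) * (((n:ℝ) - k) * x 1) ≤ (k:ℝ) * ∑ F ∈ U, ng F :=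
        le_trans hlhs hpair
      -- bound the negative-part sum
      have hngsum : ∑ F ∈ U, ng F = ∑ F ∈ U, ps F - ∑ F ∈ U, (∑ i ∈ F, x i) := by
        rw [← Finset.sum_sub_distrib]
        refine Finset.sum_congr rfl fun F _ => ?_
        rw [hpng F]
        ring
      have hng_le : ∑ F ∈ U, ng F
          ≤ (G.card : ℝ) * ((k:ℝ) * x 1) + ((n-2).choose (k-1) : ℝ) * x 1 := by
        rw [hngsum, hUf]
        have h := hpos_le
        ring_nf
        ring_nf at h
        linarith [h]
      -- main inequality
      have hmainR : (B.card : ℝ) * (((n:ℝ) - k) * x 1)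
          ≤ ((k:ℝ)^2 * (G.card:ℝ) + (k:ℝ) * ((n-2).choose (k-1):ℝ)) * x 1 := by
        have hkpos : (0:ℝ) ≤ (k:ℝ) := by positivity
        calc (B.card : ℝ) * (((n:ℝ) - k) * x 1) ≤ (k:ℝ) * ∑ F ∈ U, ng F := hkey
          _ ≤ (k:ℝ) * ((G.card : ℝ) * ((k:ℝ) * x 1) + ((n-2).choose (k-1) : ℝ) * x 1) :=
              mul_le_mul_of_nonneg_left hng_le hkpos
          _ = _ := by ring
      have hmain : (B.card : ℝ) * ((n:ℝ) - k)
          ≤ (k:ℝ)^2 * (G.card:ℝ) + (k:ℝ) * ((n-2).choose (k-1):ℝ) := by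
        have h := hmainR
        rw [show (B.card : ℝ) * (((n:ℝ) - k) * x 1)
            = ((B.card : ℝ) * ((n:ℝ) - k)) * x 1 by ring] at h
        exact le_of_mul_le_mul_right h hx1pos
      -- final arithmetic
      have hsplitR : (A1.card : ℝ) + (B.card : ℝ) = ((n-1).choose (k-1) : ℝ) := by
        have h := hsplit
        rw [hDB] at h
        exact_mod_cast h
      have htd : (G.card : ℝ) ≤ (B.card : ℝ) := by
        have h := hGD
        rw [hDB] at h
        exact_mod_cast h
      have hc2c1 : ((n-2).choose (k-1) : ℝ) ≤ ((n-1).choose (k-1) : ℝ) := by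
        exact_mod_cast Nat.choose_le_choose (k-1) (by omega : n-2 ≤ n-1)
      rw [ge_iff_le]
      exact final_arith (A1.card : ℝ) (B.card : ℝ) (G.card : ℝ)
        ((n-1).choose (k-1) : ℝ) ((n-2).choose (k-1) : ℝ) (k:ℝ) (n:ℝ)
        hKR hnK hcoef hsplitR htd hc2c1 (Nat.cast_nonneg _) (Nat.cast_nonneg _) hmain
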